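/- Define g : ℝ → ℂ by g(ω) = 1/(1+iω) + 1/(2−iω). There exists ε₀ > 0 such that for every ε with 0 < ε ≤ ε₀ and every ω ∈ ℝ the Hermitian 2×2 matrix M(ω) = [[2/(1+ω²), ε g(ω)], [ε conj(g(ω)), 4/(4+ω²)]] is positive semidefinite; in fact one has ε |g(ω)| ≤ min{ 2/(1+ω²), 4/(4+ω²) } for all ω ∈ ℝ, i.e., M(ω) is diagonally dominant. -/

import Mathlib

open Matrix Complex
open scoped Real ComplexOrder

noncomputable section

/-- The off-diagonal symbol `g(ω) = 1/(1+iω) + 1/(2-iω)`. -/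
def gEx (ω : ℝ) : ℂ := 1 / (1 + Complex.I * ω) + 1 / (2 - Complex.I * ω)

lemma gEx_eq (ω : ℝ) : gEx ω = 3 / ((1 + Complex.I * ω) * (2 - Complex.I * ω)) := by
  have h1 : (1 + Complex.I * ω) ≠ 0 := by
    intro h
    have := congrArg Complex.re h
    simp at this
  have h2 : (2 - Complex.I * ω) ≠ 0 := by
    intro h
    have := congrArg Complex.re h
    simp at this
  unfold gEx
  field_simp
  ring

lemma sq_abs_gEx (ω : ℝ) :
    ‖gEx ω‖ ^ 2 = 9 / ((1 + ω ^ 2) * (4 + ω ^ 2)) := by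
  rw [gEx_eq, norm_div, norm_mul, div_pow, mul_pow]
  simp only [Complex.sq_norm, Complex.normSq_apply]
  simp
  ring_nf

lemma dominance (ε ω : ℝ) (hε0 : 0 ≤ ε) (hε : ε ≤ 2/3) :
    ε * ‖gEx ω‖ ≤ min (2 / (1 + ω ^ 2)) (4 / (4 + ω ^ 2)) := by
  have hA : (0:ℝ) < 1 + ω^2 := by positivity
  have hB : (0:ℝ) < 4 + ω^2 := by positivity
  have hg : 0 ≤ ‖gEx ω‖ := norm_nonneg _
  have h1 : ε^2 ≤ 4/9 := by nlinarith
  have h2 : (1:ℝ) + ω^2 ≤ 4 + ω^2 := by linarith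
  have h3 : (4:ℝ) + ω^2 ≤ 4 * (1 + ω^2) := by nlinarith [sq_nonneg ω]
  rw [le_min_iff]
  constructor
  · apply le_of_pow_le_pow_left₀ two_ne_zero (by positivity)
    rw [mul_pow, sq_abs_gEx, div_pow, ← mul_div_assoc, div_le_div_iff₀ (by positivity) (by positivity)]
    nlinarith [mul_le_mul_of_nonneg_right h1 (sq_nonneg (1+ω^2)),
      mul_le_mul_of_nonneg_left h2 hA.le]
  · apply le_of_pow_le_pow_left₀ two_ne_zero (by positivity)
    rw [mul_pow, sq_abs_gEx, div_pow, ← mul_div_assoc, div_le_div_iff₀ (by positivity) (by positivity)]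
    nlinarith [mul_le_mul_of_nonneg_right h1 (sq_nonneg (4+ω^2)),
      mul_le_mul_of_nonneg_right h3 hB.le]

lemma psd_part (ε ω : ℝ) (hε0 : 0 ≤ ε) (hε : ε ≤ 2/3) :
    (!![((2 / (1 + ω ^ 2) : ℝ) : ℂ), (ε : ℂ) * gEx ω;
        (ε : ℂ) * (starRingEnd ℂ) (gEx ω), ((4 / (4 + ω ^ 2) : ℝ) : ℂ)]).PosSemidef := by
  refine Matrix.posSemidef_iff_dotProduct_mulVec.mpr ⟨?_, ?_⟩
  · ext i j
    fin_cases i <;> fin_cases j <;>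
      simp [Matrix.conjTranspose_apply, mul_comm]
  · intro x
    have key : star x ⬝ᵥ (!![((2 / (1 + ω ^ 2) : ℝ) : ℂ), (ε : ℂ) * gEx ω;
        (ε : ℂ) * (starRingEnd ℂ) (gEx ω), ((4 / (4 + ω ^ 2) : ℝ) : ℂ)]) *ᵥ x
        = (((2 / (1 + ω ^ 2)) * Complex.normSq (x 0) + (4 / (4 + ω ^ 2)) * Complex.normSq (x 1)
            + 2 * (((ε:ℂ) * gEx ω * (starRingEnd ℂ) (x 0) * x 1).re) : ℝ) : ℂ) := by
      simp [Matrix.mulVec, dotProduct, Fin.sum_univ_two]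
      apply Complex.ext <;>
        simp [Complex.normSq_apply, Complex.mul_re, Complex.mul_im, Complex.add_re, Complex.add_im] <;>
        ring
    rw [key]
    rw [Complex.nonneg_iff]
    constructor
    · simp only [Complex.ofReal_re]
      set z := (ε:ℂ) * gEx ω * (starRingEnd ℂ) (x 0) * x 1 with hz
      have hzabs : ‖z‖ = ε * ‖gEx ω‖ * ‖x 0‖ * ‖x 1‖ := by
        rw [hz]
        simp only [norm_mul, Complex.norm_real, Complex.norm_conj,
          Real.norm_of_nonneg hε0]
      have hre : -‖z‖ ≤ z.re := by
        have h1 := Complex.abs_re_le_norm z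
        have h2 := neg_abs_le z.re
        linarith [abs_nonneg z.re]
      have hg : (0:ℝ) ≤ ‖gEx ω‖ := norm_nonneg _
      have hm := dominance ε ω hε0 hε
      have hma : ε * ‖gEx ω‖ ≤ 2 / (1 + ω ^ 2) := hm.trans (min_le_left _ _)
      have hmd : ε * ‖gEx ω‖ ≤ 4 / (4 + ω ^ 2) := hm.trans (min_le_right _ _)
      have hn0 : Complex.normSq (x 0) = ‖x 0‖^2 := (Complex.sq_norm _).symm
      have hn1 : Complex.normSq (x 1) = ‖x 1‖^2 := (Complex.sq_norm _).symm
      rw [hn0, hn1]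
      set r := ‖x 0‖
      set s := ‖x 1‖
      have hr : 0 ≤ r := norm_nonneg _
      have hs : 0 ≤ s := norm_nonneg _
      nlinarith [mul_le_mul_of_nonneg_right hma (sq_nonneg r),
        mul_le_mul_of_nonneg_right hmd (sq_nonneg s),
        mul_nonneg (mul_nonneg hε0 hg) (sq_nonneg (r - s)),
        mul_nonneg hr hs]
    · exact (Complex.ofReal_im _).symm

/-- there is `ε₀ > 0` such that for all `0 < ε ≤ ε₀` and all `ω ∈ ℝ`,
`ε |g(ω)| ≤ min (2/(1+ω²)) (4/(4+ω²))` (diagonal dominance), and the Hermitian matrix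
`M(ω) = [[2/(1+ω²), ε g(ω)], [ε conj(g(ω)), 4/(4+ω²)]]` is positive semidefinite. -/
theorem diag_dominant_posSemidef :
    ∃ ε₀ : ℝ, 0 < ε₀ ∧ ∀ ε : ℝ, 0 < ε → ε ≤ ε₀ →
      (∀ ω : ℝ, ε * ‖gEx ω‖ ≤ min (2 / (1 + ω ^ 2)) (4 / (4 + ω ^ 2))) ∧
      (∀ ω : ℝ,
        (!![((2 / (1 + ω ^ 2) : ℝ) : ℂ), (ε : ℂ) * gEx ω;
            (ε : ℂ) * (starRingEnd ℂ) (gEx ω), ((4 / (4 + ω ^ 2) : ℝ) : ℂ)]).PosSemidef) := by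
  refine ⟨2/3, by norm_num, fun ε hε0 hε => ⟨fun ω => dominance ε ω hε0.le hε,
    fun ω => psd_part ε ω hε0.le hε⟩⟩
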